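/- Let M and M' be matchings in a bipartite graph with vertex parts A (agents) and B (bundles), with |M'| < |M| and M perfect on A (|M| = n = |A|). If a bundle vertex b is matched in M' to an agent different from its M-partner, and the symmetric difference / union M ∪ M' contains no cycle through b, then b lies on an M'-augmenting path in M ∪ M' originating from a B-vertex unmatched in M'. -/

import Mathlib

/-- The union graph of a perfect matching `M` (given as a bijection from agents to
bundles) and a partial matching `M'` on the bipartite vertex set
`Fin n ⊕ Fin n` (left = agents, right = bundles). -/
def unionGraph (n : ℕ) (M : Fin n ≃ Fin n) (M' : Finset (Fin n × Fin n)) :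
    SimpleGraph (Fin n ⊕ Fin n) :=
  SimpleGraph.fromRel (fun x y =>
    ∃ i j : Fin n, x = Sum.inl i ∧ y = Sum.inr j ∧ (M i = j ∨ (i, j) ∈ M'))

open SimpleGraph

lemma unionGraph_adj_inl_inr {n : ℕ} {M : Fin n ≃ Fin n} {M' : Finset (Fin n × Fin n)}
    {i j : Fin n} :
    (unionGraph n M M').Adj (Sum.inl i) (Sum.inr j) ↔ (M i = j ∨ (i, j) ∈ M') := by
  simp [unionGraph, SimpleGraph.fromRel_adj]

/-- In a chain, any element that is not the last one has a successor in the tail. -/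
lemma chain'_pred {α : Type*} {R : α → α → Prop} :
    ∀ (L : List α) (_ : L.Chain' R) (c : α) (_ : c ∈ L) (h : L ≠ [])
      (_ : c ≠ L.getLast h), ∃ y ∈ L.tail, R c y := by
  intro L
  induction L with
  | nil => intro _ c hc h; exact absurd rfl h
  | cons x T ih =>
    intro hch c hc h hlast
    cases T with
    | nil =>
      simp only [List.mem_singleton] at hc
      exact absurd (by simp [hc]) hlast
    | cons z T' =>
      rcases List.mem_cons.mp hc with rfl | hcT
      · exact ⟨z, by simp, (List.isChain_cons_cons.mp hch).1⟩
      · have hlast' : c ≠ (z :: T').getLast (by simp) := by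
          simpa [List.getLast_cons] using hlast
        obtain ⟨y, hy, hRy⟩ := ih (List.isChain_cons_cons.mp hch).2 c hcT (by simp) hlast'
        exact ⟨y, List.mem_of_mem_tail hy, hRy⟩

lemma key_lemma {n : ℕ} {M : Fin n ≃ Fin n} {M' : Finset (Fin n × Fin n)}
    (hM'1 : ∀ p ∈ M', ∀ q ∈ M', p.1 = q.1 → p = q)
    (b : Fin n)
    (hnocycle : ∀ w : (unionGraph n M M').Walk (Sum.inr b) (Sum.inr b), ¬ w.IsCycle) :
    ∀ (m : ℕ) (c : Fin n) (T : List (Fin n))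
      (w : (unionGraph n M M').Walk (Sum.inr c) (Sum.inr b)),
      n < (c :: T).length + m →
      (c :: T).Nodup →
      (c :: T).getLast (by simp) = b →
      (c :: T).Chain' (fun u v => ∃ a, (a, v) ∈ M' ∧ M a = u) →
      (∀ a, (a, c) ∈ M' → M a ≠ c) →
      w.IsPath →
      (∀ x : Fin n, Sum.inr x ∈ w.support ↔ x ∈ c :: T) →
      (∀ a : Fin n, Sum.inl a ∈ w.support → ∃ x ∈ T, (a, x) ∈ M') →
      ∃ b0 : Fin n, (∀ i, (i, b0) ∉ M') ∧
        Nonempty ((unionGraph n M M').Path (Sum.inr b0) (Sum.inr b)) := by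
  intro m
  induction m with
  | zero =>
    intro c T w hlen hnodup _ _ _ _ _ _
    have hle : (c :: T).length ≤ Fintype.card (Fin n) := hnodup.length_le_card
    simp only [Fintype.card_fin] at hle
    omega
  | succ m ih =>
    intro c T w hlen hnodup hlast hchain hheadinv hpath hsupR hsupL
    by_cases hmatched : ∃ a, (a, c) ∈ M'
    · obtain ⟨k, hk⟩ := hmatched
      have hkc : M k ≠ c := hheadinv k hk
      have hadj1 : (unionGraph n M M').Adj (Sum.inl k) (Sum.inr c) :=
        unionGraph_adj_inl_inr.mpr (Or.inr hk)
      have hadj2 : (unionGraph n M M').Adj (Sum.inl k) (Sum.inr (M k)) :=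
        unionGraph_adj_inl_inr.mpr (Or.inl rfl)
      have hcT : c ∉ T := (List.nodup_cons.mp hnodup).1
      have hkns : Sum.inl k ∉ w.support := by
        intro hmem
        obtain ⟨x, hxT, hxk⟩ := hsupL k hmem
        have hxc : x = c := by
          have := hM'1 (k, x) hxk (k, c) hk rfl
          exact (Prod.mk.injEq _ _ _ _).mp this |>.2
        exact hcT (hxc ▸ hxT)
      by_cases hc'L : M k ∈ c :: T
      · -- revisit: must close a cycle through b
        have hc'b : M k = b := by
          by_contra hne'
          have hlast' : M k ≠ (c :: T).getLast (by simp) := by rw [hlast]; exact hne'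
          obtain ⟨y, hy, a, hay, hMa⟩ :=
            chain'_pred (c :: T) hchain (M k) hc'L (by simp) hlast'
          have hak : a = k := M.injective (by rw [hMa])
          subst hak
          have : y = c := by
            have := hM'1 (a, y) hay (a, c) hk rfl
            exact (Prod.mk.injEq _ _ _ _).mp this |>.2
          subst this
          exact hcT (by simpa using hy)
        have hbc : b ≠ c := fun h => hkc (hc'b.trans h)
        have hadj2' : (unionGraph n M M').Adj (Sum.inr b) (Sum.inl k) := by
          rw [← hc'b]; exact hadj2.symm
        exfalso
        refine hnocycle (Walk.cons hadj2' (Walk.cons hadj1 w)) ?_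
        rw [Walk.cons_isCycle_iff]
        refine ⟨hpath.cons hkns, ?_⟩
        intro hmem
        rw [Walk.edges_cons, List.mem_cons] at hmem
        rcases hmem with heq | hmem
        · rw [Sym2.eq_iff] at heq
          rcases heq with ⟨h1, _⟩ | ⟨h1, _⟩
          · exact absurd h1 (by simp)
          · exact hbc (Sum.inr.injEq _ _ ▸ h1)
        · exact hkns (w.snd_mem_support_of_mem_edges hmem)
      · -- extend the path
        refine ih (M k) (c :: T)
          (Walk.cons hadj2.symm (Walk.cons hadj1 w)) (by simp only [List.length_cons] at hlen ⊢; omega)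
          (List.nodup_cons.mpr ⟨hc'L, hnodup⟩)
          (by rw [List.getLast_cons (by simp)]; exact hlast)
          (List.isChain_cons_cons.mpr ⟨⟨k, hk, rfl⟩, hchain⟩)
          ?_ ?_ ?_ ?_
        · intro a ha hMac'
          have hak : a = k := M.injective hMac'
          subst hak
          have : M a = c := by
            have := hM'1 (a, M a) ha (a, c) hk rfl
            exact (Prod.mk.injEq _ _ _ _).mp this |>.2
          exact hkc this
        · rw [Walk.cons_isPath_iff, Walk.cons_isPath_iff]
          refine ⟨⟨hpath, hkns⟩, ?_⟩
          rw [Walk.support_cons, List.mem_cons]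
          rintro (h | h)
          · simp at h
          · exact hc'L ((hsupR (M k)).mp h)
        · intro x
          rw [Walk.support_cons, Walk.support_cons]
          simp only [List.mem_cons, hsupR x]
          constructor
          · rintro (h | h | h)
            · exact Or.inl (Sum.inr.injEq _ _ ▸ h)
            · simp at h
            · exact Or.inr h
          · rintro (h | h)
            · exact Or.inl (by rw [h])
            · exact Or.inr (Or.inr h)
        · intro a ha
          rw [Walk.support_cons, Walk.support_cons] at ha
          simp only [List.mem_cons] at ha
          rcases ha with h | h | h
          · simp at h
          · have : a = k := by simpa using h
            exact ⟨c, by simp, this ▸ hk⟩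
          · obtain ⟨x, hx, hax⟩ := hsupL a h
            exact ⟨x, List.mem_cons_of_mem _ hx, hax⟩
    · exact ⟨c, fun i hi => hmatched ⟨i, hi⟩, ⟨⟨w, hpath⟩⟩⟩

/-- Structural fact about the union of two matchings: if `M` is a perfect matching
(a bijection from agents to bundles), `M'` is a matching with `|M'| < n`, the
bundle `b` is matched in `M'` to an agent different from its `M`-partner, and the
union graph contains no cycle through `b`, then `b` lies on a path in the union
graph originating from a bundle vertex unmatched in `M'`. -/
theorem union_of_matchings_path (n : ℕ) (M : Fin n ≃ Fin n)
    (M' : Finset (Fin n × Fin n))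
    (hM'1 : ∀ p ∈ M', ∀ q ∈ M', p.1 = q.1 → p = q)
    (hM'2 : ∀ p ∈ M', ∀ q ∈ M', p.2 = q.2 → p = q)
    (hcard : M'.card < n)
    (b k : Fin n) (hk : (k, b) ∈ M') (hkb : M k ≠ b)
    (hnocycle : ∀ w : (unionGraph n M M').Walk (Sum.inr b) (Sum.inr b), ¬ w.IsCycle) :
    ∃ b0 : Fin n, (∀ i, (i, b0) ∉ M') ∧
      Nonempty ((unionGraph n M M').Path (Sum.inr b0) (Sum.inr b)) := by
  refine key_lemma hM'1 b hnocycle (n + 1) b [] Walk.nil (by simp; omega) (by simp) (by simp)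
    (List.isChain_singleton _) ?_ Walk.IsPath.nil ?_ ?_
  · intro a ha
    have : a = k := by
      have := hM'2 (a, b) ha (k, b) hk rfl
      exact (Prod.mk.injEq _ _ _ _).mp this |>.1
    rw [this]; exact hkb
  · intro x; simp [Sum.inr.injEq]
  · intro a ha; simp at ha
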